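/- arXiv:2206.08996 — 3 statements merged into one kernel-verified Lean document; each statement's English description precedes it below -/
import Mathlib

section
/- Fix innate opinions s ∈ ℝⁿ and distinct vertices i, j. For M a Laplacian matrix write z_M = (I+M)^{-1}·s. Then the one-sided derivative of polarization in the direction of edge weight w_ij exists and is given by lim_{t→0⁺} (P(z_{L + t·L_ij}) − P(z_L))/t = −2·s̃ᵀ(I+L)^{-2}·L_ij·(I+L)^{-1}·s̃ = −2·z̃ᵀ(I+L)^{-1}·L_ij·z̃, where z = z_L. -/
open Matrix Finset

noncomputable def deg {n : ℕ} (W : Matrix (Fin n) (Fin n) ℝ) (i : Fin n) : ℝ := ∑ j, W i j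

noncomputable def lap {n : ℕ} (W : Matrix (Fin n) (Fin n) ℝ) : Matrix (Fin n) (Fin n) ℝ :=
  Matrix.diagonal (deg W) - W

noncomputable def mean {n : ℕ} (x : Fin n → ℝ) : ℝ := (∑ i, x i) / n

noncomputable def ctr {n : ℕ} (x : Fin n → ℝ) : Fin n → ℝ := fun i => x i - mean x

noncomputable def pol {n : ℕ} (x : Fin n → ℝ) : ℝ := ∑ i, (x i - mean x) ^ 2

def vij {n : ℕ} (i j : Fin n) : Fin n → ℝ :=
  fun k => (if k = i then (1 : ℝ) else 0) - (if k = j then (1 : ℝ) else 0)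

lemma mean_add {n : ℕ} (x y : Fin n → ℝ) : mean (x + y) = mean x + mean y := by
  simp [mean, Finset.sum_add_distrib, add_div]

lemma mean_smul {n : ℕ} (t : ℝ) (x : Fin n → ℝ) : mean (t • x) = t * mean x := by
  simp only [mean, Pi.smul_apply, smul_eq_mul, ← Finset.mul_sum, mul_div_assoc]

lemma sum_ctr {n : ℕ} (x : Fin n → ℝ) : ∑ i, ctr x i = 0 := by
  rcases Nat.eq_zero_or_pos n with h | h
  · subst h; simp
  · have hn : (n : ℝ) ≠ 0 := Nat.cast_ne_zero.2 h.ne'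
    simp only [ctr, Finset.sum_sub_distrib, Finset.sum_const, Finset.card_univ,
      Fintype.card_fin, nsmul_eq_mul, mean]
    field_simp
    ring

lemma ctr_dot_const {n : ℕ} (y : Fin n → ℝ) (c : ℝ) :
    ctr y ⬝ᵥ (fun _ => c) = 0 := by
  simp only [dotProduct]
  rw [← Finset.sum_mul, sum_ctr, zero_mul]

lemma pol_add {n : ℕ} (y h : Fin n → ℝ) :
    pol (y + h) = pol y + 2 * (ctr y ⬝ᵥ h) + pol h := by
  have key : ∑ i, ctr y i * ctr h i = ctr y ⬝ᵥ h := by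
    have h1 : ∀ i ∈ Finset.univ, ctr y i * ctr h i = ctr y i * h i - mean h * ctr y i := by
      intro i _; simp only [ctr]; ring
    rw [Finset.sum_congr rfl h1, Finset.sum_sub_distrib, ← Finset.mul_sum, sum_ctr,
      mul_zero, sub_zero]
    rfl
  have h2 : ∀ i ∈ Finset.univ, (y i + h i - (mean y + mean h)) ^ 2
      = (y i - mean y) ^ 2 + 2 * (ctr y i * ctr h i) + (h i - mean h) ^ 2 := by
    intro i _; simp only [ctr]; ring
  simp only [pol, Pi.add_apply, mean_add]
  rw [Finset.sum_congr rfl h2, Finset.sum_add_distrib, Finset.sum_add_distrib,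
    ← Finset.mul_sum, key]

lemma pol_smul {n : ℕ} (t : ℝ) (x : Fin n → ℝ) : pol (t • x) = t ^ 2 * pol x := by
  simp only [pol, Pi.smul_apply, smul_eq_mul, mean_smul, Finset.mul_sum]
  exact Finset.sum_congr rfl fun i _ => by ring

lemma continuous_pol {n : ℕ} : Continuous (pol : (Fin n → ℝ) → ℝ) := by
  unfold pol mean
  exact continuous_finset_sum _ fun i _ =>
    ((continuous_apply i).sub ((continuous_finset_sum _ fun j _ =>
      continuous_apply j).div_const _)).pow 2

lemma continuous_dot {n : ℕ} (a : Fin n → ℝ) :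
    Continuous (fun x : Fin n → ℝ => a ⬝ᵥ x) := by
  unfold dotProduct
  exact continuous_finset_sum _ fun i _ => (continuous_const.mul (continuous_apply i))

lemma vecMulVec_mulVec' {n : ℕ} (a b x : Fin n → ℝ) :
    vecMulVec a b *ᵥ x = (b ⬝ᵥ x) • a := by
  funext k
  simp [vecMulVec, mulVec, dotProduct, Finset.mul_sum, mul_comm, mul_left_comm]

lemma sum_vij {n : ℕ} (i j : Fin n) (hij : i ≠ j) : ∑ k, vij i j k = 0 := by
  simp [vij, Finset.sum_sub_distrib]

lemma const_dot_vij {n : ℕ} (i j : Fin n) (hij : i ≠ j) (c : ℝ) :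
    vij i j ⬝ᵥ (fun _ => c) = 0 := by
  simp only [dotProduct]
  rw [← Finset.sum_mul, sum_vij i j hij, zero_mul]
lemma lap_mulVec_const {n : ℕ} (W : Matrix (Fin n) (Fin n) ℝ) (c : ℝ) :
    lap W *ᵥ (fun _ => c) = 0 := by
  funext k
  simp only [lap, mulVec, dotProduct, Matrix.sub_apply, diagonal_apply, deg, Pi.zero_apply,
    sub_mul, Finset.sum_sub_distrib, Finset.sum_ite_eq, Finset.mem_univ, if_true,
    ← Finset.sum_mul, sub_self]

lemma lap_quad_nonneg {n : ℕ} (W : Matrix (Fin n) (Fin n) ℝ) (hsymm : W.IsSymm)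
    (hW0 : ∀ i j, 0 ≤ W i j) (x : Fin n → ℝ) :
    0 ≤ x ⬝ᵥ (lap W *ᵥ x) := by
  have hWs : ∀ i j, W j i = W i j := fun i j => congrFun (congrFun hsymm i) j
  have expand : x ⬝ᵥ (lap W *ᵥ x)
      = ∑ i, ∑ j, (W i j * x i ^ 2 - W i j * (x i * x j)) := by
    simp only [lap, dotProduct, mulVec, dotProduct, Matrix.sub_apply, diagonal_apply, deg]
    refine Finset.sum_congr rfl fun i _ => ?_
    rw [Finset.mul_sum]
    have h1 : ∀ j ∈ Finset.univ, x i * (((if i = j then ∑ k, W i k else 0) - W i j) * x j)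
        = (if i = j then (∑ k, W i k) * x j * x i else 0) - W i j * (x i * x j) := by
      intro j _; by_cases h : i = j <;> simp [h] <;> ring
    rw [Finset.sum_congr rfl h1, Finset.sum_sub_distrib, Finset.sum_ite_eq,
      if_pos (Finset.mem_univ i), Finset.sum_sub_distrib, ← Finset.sum_mul]
    ring
  have swap : ∑ i, ∑ j, W i j * x j ^ 2 = ∑ i, ∑ j, W i j * x i ^ 2 := by
    rw [Finset.sum_comm]
    exact Finset.sum_congr rfl fun a _ => Finset.sum_congr rfl fun b _ => by rw [hWs]
  have key : x ⬝ᵥ (lap W *ᵥ x) = (1/2) * ∑ i, ∑ j, W i j * (x i - x j) ^ 2 := by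
    rw [expand]
    have e1 : ∑ i, ∑ j, W i j * (x i - x j) ^ 2
        = ∑ i, ((∑ j, (W i j * x i ^ 2 - W i j * (x i * x j)))
            + (∑ j, (W i j * x j ^ 2 - W i j * (x i * x j)))) := by
      refine Finset.sum_congr rfl fun i _ => ?_
      rw [← Finset.sum_add_distrib]
      refine Finset.sum_congr rfl fun j _ => by ring
    rw [e1, Finset.sum_add_distrib]
    have e2 : ∑ i, ∑ j, (W i j * x j ^ 2 - W i j * (x i * x j))
        = ∑ i, ∑ j, (W i j * x i ^ 2 - W i j * (x i * x j)) := by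
      simp only [Finset.sum_sub_distrib, swap]
    rw [e2]; ring
  rw [key]
  have : 0 ≤ ∑ i, ∑ j, W i j * (x i - x j) ^ 2 :=
    Finset.sum_nonneg fun i _ => Finset.sum_nonneg fun j _ =>
      mul_nonneg (hW0 i j) (sq_nonneg _)
  linarith
lemma mat_symm {n : ℕ} (W : Matrix (Fin n) (Fin n) ℝ) (hsymm : W.IsSymm)
    (v : Fin n → ℝ) (t : ℝ) :
    (1 + (lap W + t • vecMulVec v v))ᵀ = 1 + (lap W + t • vecMulVec v v) := by
  rw [transpose_add, transpose_add, transpose_one, transpose_smul, lap, transpose_sub,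
    diagonal_transpose, hsymm]
  congr 2
  funext a b
  simp [vecMulVec, transpose_apply, mul_comm]

lemma posdef_main {n : ℕ} (W : Matrix (Fin n) (Fin n) ℝ) (hsymm : W.IsSymm)
    (hW0 : ∀ i j, 0 ≤ W i j) (v : Fin n → ℝ) (t : ℝ) (ht : 0 ≤ t) :
    (1 + (lap W + t • vecMulVec v v)).PosDef := by
  rw [posDef_iff_dotProduct_mulVec]
  constructor
  · show _ᴴ = _
    rw [conjTranspose_eq_transpose_of_trivial, mat_symm W hsymm]
  · intro x hx
    have hstar : star x = x := funext fun k => star_trivial _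
    rw [hstar]
    have hmv : (1 + (lap W + t • vecMulVec v v)) *ᵥ x
        = x + (lap W *ᵥ x + t • (vecMulVec v v *ᵥ x)) := by
      rw [add_mulVec, one_mulVec, add_mulVec, smul_mulVec]
    rw [hmv, dotProduct_add, dotProduct_add, dotProduct_smul, vecMulVec_mulVec',
      dotProduct_smul, smul_eq_mul, smul_eq_mul]
    have h1 : 0 < x ⬝ᵥ x := by
      have := (dotProduct_self_star_pos_iff (v := x)).2 hx
      rwa [hstar] at this
    have h2 : 0 ≤ x ⬝ᵥ (lap W *ᵥ x) := lap_quad_nonneg W hsymm hW0 x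
    have h3 : 0 ≤ t * ((v ⬝ᵥ x) * (x ⬝ᵥ v)) := by
      rw [dotProduct_comm x v]
      exact mul_nonneg ht (mul_self_nonneg _)
    linarith
/-- Proposition 2: the one-sided derivative of polarization in the
direction of the edge weight `w_ij` exists and equals
`-2 s̃ᵀ(I+L)⁻² L_ij (I+L)⁻¹ s̃ = -2 z̃ᵀ(I+L)⁻¹ L_ij z̃`. -/
theorem stmt_3 {n : ℕ} (hn : 2 ≤ n) (wbar : ℝ) (hwbar : 0 < wbar)
    (W : Matrix (Fin n) (Fin n) ℝ)
    (hsymm : W.IsSymm) (hdiag : ∀ i, W i i = 0)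
    (hW : ∀ i j, 0 ≤ W i j ∧ W i j ≤ wbar)
    (s : Fin n → ℝ) (i j : Fin n) (hij : i ≠ j)
    (z : Fin n → ℝ) (hz : z = (1 + lap W)⁻¹ *ᵥ s) :
    Filter.Tendsto
        (fun t : ℝ =>
          (pol ((1 + (lap W + t • vecMulVec (vij i j) (vij i j)))⁻¹ *ᵥ s) -
              pol ((1 + lap W)⁻¹ *ᵥ s)) / t)
        (nhdsWithin 0 (Set.Ioi 0))
        (nhds (-2 * (ctr s ⬝ᵥ (((1 + lap W)⁻¹ * (1 + lap W)⁻¹) *ᵥ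
          (vecMulVec (vij i j) (vij i j) *ᵥ ((1 + lap W)⁻¹ *ᵥ ctr s)))))) ∧
      -2 * (ctr s ⬝ᵥ (((1 + lap W)⁻¹ * (1 + lap W)⁻¹) *ᵥ
          (vecMulVec (vij i j) (vij i j) *ᵥ ((1 + lap W)⁻¹ *ᵥ ctr s)))) =
        -2 * (ctr z ⬝ᵥ ((1 + lap W)⁻¹ *ᵥ
          (vecMulVec (vij i j) (vij i j) *ᵥ ctr z))) := by
  classical
  have hW0 : ∀ a b, 0 ≤ W a b := fun a b => (hW a b).1
  set v : Fin n → ℝ := vij i j with hv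
  set E : Matrix (Fin n) (Fin n) ℝ := vecMulVec v v with hEdef
  set A : Matrix (Fin n) (Fin n) ℝ := 1 + lap W with hAdef
  have hBeq : ∀ t : ℝ, 1 + (lap W + t • E) = A + t • E := fun t => by
    rw [hAdef, add_assoc]
  -- positive definiteness and invertibility
  have hPD : ∀ t : ℝ, 0 ≤ t → (A + t • E).PosDef := fun t ht => by
    rw [← hBeq t]; exact posdef_main W hsymm hW0 v t ht
  have hA0 : A + (0:ℝ) • E = A := by rw [zero_smul, add_zero]
  have hAPD : A.PosDef := hA0 ▸ hPD 0 le_rfl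
  have hAdet : IsUnit A.det := (Matrix.isUnit_iff_isUnit_det _).1 hAPD.isUnit
  -- symmetry of A⁻¹
  have hAsymm : Aᵀ = A := by
    rw [hAdef, transpose_add, transpose_one, lap, transpose_sub, diagonal_transpose, hsymm]
  have hAinvsymm : (A⁻¹)ᵀ = A⁻¹ := by rw [transpose_nonsing_inv, hAsymm]
  have hshift : ∀ x y : Fin n → ℝ, x ⬝ᵥ (A⁻¹ *ᵥ y) = (A⁻¹ *ᵥ x) ⬝ᵥ y := by
    intro x y
    rw [dotProduct_mulVec, ← mulVec_transpose, hAinvsymm]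
  -- constant vectors
  have hconst : ∀ c : ℝ, A *ᵥ (fun _ => c) = fun _ => c := by
    intro c
    rw [hAdef, add_mulVec, one_mulVec, lap_mulVec_const, add_zero]
  have hinvconst : ∀ c : ℝ, A⁻¹ *ᵥ (fun _ => c) = fun _ => c := by
    intro c
    conv_lhs => rw [← hconst c]
    rw [mulVec_mulVec, nonsing_inv_mul _ hAdet, one_mulVec]
  have hEconst : ∀ c : ℝ, E *ᵥ (fun _ => c) = 0 := by
    intro c
    rw [hEdef, vecMulVec_mulVec', const_dot_vij i j hij, zero_smul]
  -- rewrite z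
  rw [← hz]
  have hctr_s : ctr s = s - (fun _ => mean s) := rfl
  have hctr_z : ctr z = z - (fun _ => mean z) := rfl
  have hAinvctr : A⁻¹ *ᵥ ctr s = z - (fun _ => mean s) := by
    rw [hctr_s, mulVec_sub, hinvconst, ← hz]
  have hEz1 : E *ᵥ (A⁻¹ *ᵥ ctr s) = E *ᵥ z := by
    rw [hAinvctr, mulVec_sub, hEconst, sub_zero]
  have hEz2 : E *ᵥ ctr z = E *ᵥ z := by
    rw [hctr_z, mulVec_sub, hEconst, sub_zero]
  have hvconst : ∀ c : ℝ, v ⬝ᵥ (fun _ => c) = 0 := by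
    intro c; rw [hv]; exact const_dot_vij i j hij c
  have hzero : ∀ c : ℝ, (fun _ => c) ⬝ᵥ (A⁻¹ *ᵥ (E *ᵥ z)) = 0 := by
    intro c
    rw [hshift, hinvconst, hEdef, vecMulVec_mulVec', dotProduct_smul, smul_eq_mul,
      dotProduct_comm (fun _ => c) v, hvconst, mul_zero]
  have hVeq : ctr s ⬝ᵥ ((A⁻¹ * A⁻¹) *ᵥ (E *ᵥ (A⁻¹ *ᵥ ctr s)))
      = ctr z ⬝ᵥ (A⁻¹ *ᵥ (E *ᵥ z)) := by
    rw [hEz1, ← mulVec_mulVec, hshift, hAinvctr, hctr_z, sub_dotProduct, sub_dotProduct,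
      hzero, hzero]
  constructor
  · -- the limit
    rw [hVeq]
    set q : Fin n → ℝ := E *ᵥ z with hq
    set G : ℝ → ℝ := fun t =>
      -2 * (ctr z ⬝ᵥ ((A + t • E)⁻¹ *ᵥ q)) + t * pol ((A + t • E)⁻¹ *ᵥ q) with hG
    have hcontB : Continuous fun t : ℝ => A + t • E :=
      continuous_const.add (continuous_id.smul continuous_const)
    have hinvcont : ContinuousAt (fun t : ℝ => (A + t • E)⁻¹) 0 := by
      have h1 : ContinuousAt Inv.inv (A + (0:ℝ) • E) := by
        rw [hA0]
        exact continuousAt_matrix_inv A (NormedRing.inverse_continuousAt hAdet.unit)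
      exact ContinuousAt.comp (g := Inv.inv) (f := fun t : ℝ => A + t • E) h1
        hcontB.continuousAt
    have hFcont : ContinuousAt (fun t : ℝ => (A + t • E)⁻¹ *ᵥ q) 0 := by
      have : Continuous fun M : Matrix (Fin n) (Fin n) ℝ => M *ᵥ q :=
        Continuous.matrix_mulVec continuous_id continuous_const
      exact this.continuousAt.comp hinvcont
    have hGcont : ContinuousAt G 0 := by
      rw [hG]
      exact (continuousAt_const.mul (((continuous_dot (ctr z)).continuousAt).comp hFcont)).add
        (continuousAt_id.mul ((continuous_pol.continuousAt).comp hFcont))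
    have hG0 : G 0 = -2 * (ctr z ⬝ᵥ (A⁻¹ *ᵥ (E *ᵥ z))) := by
      rw [hG]
      simp only [hA0, zero_mul, add_zero, hq]
    have hGlim : Filter.Tendsto G (nhdsWithin 0 (Set.Ioi 0))
        (nhds (-2 * (ctr z ⬝ᵥ (A⁻¹ *ᵥ (E *ᵥ z))))) := by
      rw [← hG0]
      exact hGcont.tendsto.mono_left nhdsWithin_le_nhds
    refine hGlim.congr' ?_
    refine Filter.eventuallyEq_of_mem self_mem_nhdsWithin fun t ht => ?_
    -- ht : t ∈ Set.Ioi 0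
    have htpos : (0:ℝ) < t := ht
    have hdet : IsUnit (A + t • E).det :=
      (Matrix.isUnit_iff_isUnit_det _).1 (hPD t htpos.le).isUnit
    have hid : (A + t • E)⁻¹ = A⁻¹ - t • ((A + t • E)⁻¹ * (E * A⁻¹)) := by
      apply Matrix.inv_eq_right_inv
      rw [Matrix.mul_sub, Matrix.mul_smul, ← Matrix.mul_assoc,
        Matrix.mul_nonsing_inv _ hdet, Matrix.one_mul, Matrix.add_mul, Matrix.smul_mul,
        Matrix.mul_nonsing_inv _ hAdet]
      abel
    have hzs : (A + t • E)⁻¹ *ᵥ s = z + (-t) • ((A + t • E)⁻¹ *ᵥ q) := by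
      conv_lhs => rw [hid]
      rw [sub_mulVec, smul_mulVec, ← mulVec_mulVec, ← mulVec_mulVec, ← hz,
        ← hq, neg_smul, ← sub_eq_add_neg]
    rw [hBeq, hzs, pol_add, pol_smul]
    simp only [hG]
    rw [dotProduct_smul, smul_eq_mul]
    field_simp
    ring
  · -- equality of the two expressions
    rw [hVeq, hEz2]
end

section
/- Let (i,j) be a pair of distinct vertices with w_ij < w̄ and δ ∈ (0, w̄ − w_ij]. If z̃ᵀ(I+L)^{-1}v_ij = 0, then adding weight δ to edge (i,j) does not reduce polarization: P(z⁺) ≥ P(z). -/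
open Matrix Finset

lemma sum_ctr_zero {n : ℕ} (hn : (n:ℝ) ≠ 0) (x : Fin n → ℝ) : ∑ k, ctr x k = 0 := by
  simp only [ctr, mean, Finset.sum_sub_distrib, Finset.sum_const, Finset.card_univ,
    Fintype.card_fin, nsmul_eq_mul]
  field_simp
  ring

lemma lap_quad {n : ℕ} (W : Matrix (Fin n) (Fin n) ℝ) (hsymm : W.IsSymm)
    (hWnn : ∀ a b, 0 ≤ W a b) (x : Fin n → ℝ) :
    0 ≤ x ⬝ᵥ lap W *ᵥ x := by
  have hsym : ∀ a b : Fin n, W b a = W a b := fun a b => hsymm.apply a b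
  have key : 2 * (x ⬝ᵥ lap W *ᵥ x) = ∑ a, ∑ b, W a b * (x a - x b)^2 := by
    have hsw : ∑ a, ∑ b, W a b * x b ^ 2 = ∑ a, ∑ b, W a b * x a ^ 2 := by
      rw [Finset.sum_comm]
      exact Finset.sum_congr rfl fun a _ => Finset.sum_congr rfl fun b _ => by rw [hsym b a]
    have lhs : x ⬝ᵥ lap W *ᵥ x
        = ∑ a, ∑ b, (W a b * x a ^ 2 - W a b * x a * x b) := by
      rw [dotProduct]
      refine Finset.sum_congr rfl fun a _ => ?_
      have h1 : (lap W *ᵥ x) a = (∑ b, W a b) * x a - ∑ b, W a b * x b := by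
        rw [lap, Matrix.sub_mulVec, Pi.sub_apply, Matrix.mulVec_diagonal]
        simp [deg, Matrix.mulVec, dotProduct]
      rw [h1, Finset.sum_mul, mul_sub, Finset.mul_sum, Finset.mul_sum,
        ← Finset.sum_sub_distrib]
      exact Finset.sum_congr rfl fun b _ => by ring
    have rhs : ∑ a, ∑ b, W a b * (x a - x b)^2
        = ∑ a, ∑ b, (W a b * x a ^ 2 - 2 * (W a b * x a * x b) + W a b * x b ^ 2) := by
      refine Finset.sum_congr rfl fun a _ => Finset.sum_congr rfl fun b _ => by ring
    have h2 : ∑ a, ∑ b, 2 * (W a b * x a * x b) = 2 * ∑ a, ∑ b, W a b * x a * x b := by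
      simp only [Finset.mul_sum]
    rw [lhs, rhs]
    simp only [Finset.sum_add_distrib, Finset.sum_sub_distrib, hsw]
    rw [h2]
    ring
  have hnn : 0 ≤ ∑ a, ∑ b : Fin n, W a b * (x a - x b)^2 :=
    Finset.sum_nonneg fun a _ => Finset.sum_nonneg fun b _ =>
      mul_nonneg (hWnn a b) (sq_nonneg _)
  linarith [key]

lemma isUnit_det_one_add {n : ℕ} {A : Matrix (Fin n) (Fin n) ℝ}
    (hA : ∀ x, 0 ≤ x ⬝ᵥ A *ᵥ x) : IsUnit (1 + A).det := by
  rw [isUnit_iff_ne_zero]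
  intro hdet
  obtain ⟨x, hx0, hx⟩ := (Matrix.exists_mulVec_eq_zero_iff).2 hdet
  have h1 : x ⬝ᵥ (1 + A) *ᵥ x = 0 := by rw [hx]; simp
  have h2 : x ⬝ᵥ (1 + A) *ᵥ x = x ⬝ᵥ x + x ⬝ᵥ A *ᵥ x := by
    rw [Matrix.add_mulVec, dotProduct_add, Matrix.one_mulVec]
  have h3 : x ⬝ᵥ x ≤ 0 := by nlinarith [hA x]
  have h4 : x ⬝ᵥ x = 0 := le_antisymm h3 (Finset.sum_nonneg fun a _ => mul_self_nonneg _)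
  exact hx0 (dotProduct_self_eq_zero.mp h4)

/-- if `z̃ᵀ(I+L)⁻¹v_ij = 0`, then adding weight `δ` to the edge `(i,j)`
does not reduce polarization. -/
theorem stmt_9 {n : ℕ} (hn : 2 ≤ n) (wbar : ℝ) (hwbar : 0 < wbar)
    (W : Matrix (Fin n) (Fin n) ℝ)
    (hsymm : W.IsSymm) (hdiag : ∀ i, W i i = 0)
    (hW : ∀ i j, 0 ≤ W i j ∧ W i j ≤ wbar)
    (s : Fin n → ℝ) (i j : Fin n) (hij : i ≠ j)
    (hwij : W i j < wbar)
    (δ : ℝ) (hδ0 : 0 < δ) (hδ : δ ≤ wbar - W i j)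
    (z zp : Fin n → ℝ)
    (hz : z = (1 + lap W)⁻¹ *ᵥ s)
    (hzp : zp = (1 + (lap W + δ • vecMulVec (vij i j) (vij i j)))⁻¹ *ᵥ s)
    (horth : ctr z ⬝ᵥ ((1 + lap W)⁻¹ *ᵥ vij i j) = 0) :
    pol z ≤ pol zp := by
  have hncast : (n:ℝ) ≠ 0 := Nat.cast_ne_zero.mpr (by omega)
  set v : Fin n → ℝ := vij i j with hv
  set M : Matrix (Fin n) (Fin n) ℝ := 1 + lap W with hM
  set Mp : Matrix (Fin n) (Fin n) ℝ := 1 + (lap W + δ • vecMulVec v v) with hMp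
  have hquadL : ∀ x, 0 ≤ x ⬝ᵥ lap W *ᵥ x :=
    lap_quad W hsymm (fun a b => (hW a b).1)
  have hvv : ∀ x : Fin n → ℝ, (vecMulVec v v) *ᵥ x = (v ⬝ᵥ x) • v := by
    intro x
    funext a
    simp only [Matrix.mulVec, Matrix.vecMulVec_apply, dotProduct, Pi.smul_apply, smul_eq_mul]
    rw [Finset.sum_mul]
    exact Finset.sum_congr rfl fun b _ => by ring
  have hquadLp : ∀ x, 0 ≤ x ⬝ᵥ (lap W + δ • vecMulVec v v) *ᵥ x := by
    intro x
    rw [Matrix.add_mulVec, dotProduct_add, Matrix.smul_mulVec, hvv x,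
      dotProduct_smul, dotProduct_smul]
    have hc : x ⬝ᵥ v = v ⬝ᵥ x := dotProduct_comm x v
    simp only [smul_eq_mul, hc]
    nlinarith [hquadL x, sq_nonneg (v ⬝ᵥ x), hδ0.le]
  have hMdet : IsUnit M.det := isUnit_det_one_add hquadL
  have hMpdet : IsUnit Mp.det := isUnit_det_one_add hquadLp
  have hMz : M *ᵥ z = s := by
    rw [hz, Matrix.mulVec_mulVec, Matrix.mul_nonsing_inv _ hMdet, Matrix.one_mulVec]
  have hMpzp : Mp *ᵥ zp = s := by
    rw [hzp, Matrix.mulVec_mulVec, Matrix.mul_nonsing_inv _ hMpdet, Matrix.one_mulVec]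
  set t : ℝ := -(δ * (v ⬝ᵥ zp)) with ht
  set u : Fin n → ℝ := M⁻¹ *ᵥ v with hu
  have hMzp : M *ᵥ zp = s + t • v := by
    have : Mp *ᵥ zp = M *ᵥ zp + (δ * (v ⬝ᵥ zp)) • v := by
      rw [hMp, hM]
      rw [Matrix.add_mulVec, Matrix.add_mulVec, Matrix.add_mulVec,
        Matrix.smul_mulVec, hvv zp, smul_smul]
      abel
    rw [this] at hMpzp
    rw [ht]
    have := hMpzp
    funext a
    have h := congrFun hMpzp a
    simp only [Pi.add_apply, Pi.smul_apply, Pi.neg_apply, smul_eq_mul, neg_smul,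
      neg_mul] at h ⊢
    linarith
  have hzp2 : zp = fun k => z k + t * u k := by
    have h1 : M⁻¹ *ᵥ (M *ᵥ zp) = zp := by
      rw [Matrix.mulVec_mulVec, Matrix.nonsing_inv_mul _ hMdet, Matrix.one_mulVec]
    rw [hMzp, Matrix.mulVec_add, Matrix.mulVec_smul, ← hz, ← hu] at h1
    funext k
    have := congrFun h1 k
    simp only [Pi.add_apply, Pi.smul_apply, smul_eq_mul] at this
    linarith
  -- mean of zp
  have hmean : mean zp = mean z + t * mean u := by
    rw [hzp2]
    simp only [mean, Finset.sum_add_distrib, ← Finset.mul_sum]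
    ring
  have hctr : ∀ k, ctr zp k = ctr z k + t * ctr u k := by
    intro k
    simp only [ctr, hmean]
    rw [hzp2]
    ring
  have horth' : ∑ k, ctr z k * u k = 0 := by
    simpa [dotProduct, hu] using horth
  have hcross : ∑ k, ctr z k * ctr u k = 0 := by
    have : ∑ k, ctr z k * ctr u k = ∑ k, ctr z k * u k - mean u * ∑ k, ctr z k := by
      rw [Finset.mul_sum, ← Finset.sum_sub_distrib]
      exact Finset.sum_congr rfl fun k _ => by simp only [ctr]; ring
    rw [this, horth', sum_ctr_zero hncast]
    ring
  have hpol : pol zp = pol z + t^2 * ∑ k, (ctr u k)^2 := by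
    have : ∀ k, (zp k - mean zp)^2 = (z k - mean z)^2 + 2 * t * (ctr z k * ctr u k)
        + t^2 * (ctr u k)^2 := by
      intro k
      have h := hctr k
      simp only [ctr] at h ⊢
      rw [show zp k - mean zp = (z k - mean z) + t * (u k - mean u) from h]
      ring
    simp only [pol]
    rw [Finset.sum_congr rfl fun k _ => this k]
    rw [Finset.sum_add_distrib, Finset.sum_add_distrib, ← Finset.mul_sum, hcross,
      ← Finset.mul_sum]
    ring
  rw [hpol]
  have : 0 ≤ t^2 * ∑ k, (ctr u k)^2 := by positivity
  linarith
end

section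
/- Let (i,j) be a pair of distinct vertices with w_ij < w̄ and δ ∈ (0, w̄ − w_ij], and let L⁺ = L + δ·v_ij·v_ijᵀ. Let v be a unit-norm eigenvector of L with L·v = λ₂(L)·v and vᵀ1 = 0, and set α = |v_i − v_j|. Then λ₂(L⁺) − λ₂(L) ≤ δ·α², and if β := λ₃(L) − λ₂(L) > 0 then additionally λ₂(L⁺) − λ₂(L) ≥ max{1 − 2δ/β, 0}·δ·α². -/
open Matrix Finset

open scoped RealInnerProductSpace

section Aux

variable {n : ℕ} {A : Matrix (Fin n) (Fin n) ℝ} (hA : A.IsHermitian)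

/-- coefficient of `x` in the eigenbasis of `A` -/
noncomputable def coefA (hA : A.IsHermitian) (x : Fin n → ℝ) (k : Fin n) : ℝ :=
  ∑ m, (hA.eigenvectorBasis k) m * x m

lemma inner_eq (x y : EuclideanSpace ℝ (Fin n)) : ⟪x, y⟫ = ∑ m, x m * y m := by
  simp [PiLp.inner_apply, RCLike.inner_apply, mul_comm]

lemma parseval (x y : Fin n → ℝ) :
    ∑ k, coefA hA x k * coefA hA y k = ∑ m, x m * y m := by
  have h := (hA.eigenvectorBasis).sum_inner_mul_inner
    (WithLp.toLp 2 x : EuclideanSpace ℝ (Fin n)) (WithLp.toLp 2 y : EuclideanSpace ℝ (Fin n))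
  rw [inner_eq] at h
  simp only [PiLp.toLp_apply] at h
  rw [← h]
  congr 1; funext k
  rw [inner_eq, inner_eq]
  simp only [coefA, PiLp.toLp_apply]
  congr 1
  · exact Finset.sum_congr rfl (fun m _ => mul_comm _ _)

lemma basis_dot (k l : Fin n) :
    coefA hA (hA.eigenvectorBasis l) k = if k = l then 1 else 0 := by
  have h := orthonormal_iff_ite.mp (hA.eigenvectorBasis.orthonormal) k l
  rw [inner_eq] at h
  simpa [coefA] using h

lemma coefA_dot (x : Fin n → ℝ) (k : Fin n) :
    (hA.eigenvectorBasis k : Fin n → ℝ) ⬝ᵥ x = coefA hA x k := rfl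

lemma transpose_eq (hA : A.IsHermitian) : Aᵀ = A := by
  ext a b
  have := congrFun (congrFun hA a) b
  simpa [Matrix.conjTranspose_apply] using this

lemma dot_symm (hA : A.IsHermitian) (x y : Fin n → ℝ) :
    x ⬝ᵥ (A *ᵥ y) = (A *ᵥ x) ⬝ᵥ y := by
  rw [Matrix.dotProduct_mulVec, ← Matrix.mulVec_transpose, transpose_eq hA]

lemma eig_dot (x : Fin n → ℝ) (k : Fin n) :
    (hA.eigenvectorBasis k : Fin n → ℝ) ⬝ᵥ (A *ᵥ x) = hA.eigenvalues k * coefA hA x k := by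
  have hAu : A *ᵥ (hA.eigenvectorBasis k : Fin n → ℝ)
      = hA.eigenvalues k • (hA.eigenvectorBasis k : Fin n → ℝ) := hA.mulVec_eigenvectorBasis k
  rw [Matrix.dotProduct_mulVec, ← Matrix.mulVec_transpose, transpose_eq hA, hAu,
    smul_dotProduct]
  rfl

lemma quad_expand (x : Fin n → ℝ) :
    x ⬝ᵥ (A *ᵥ x) = ∑ k, hA.eigenvalues k * (coefA hA x k) ^ 2 := by
  have h := parseval hA x (A *ᵥ x)
  have h2 : ∀ k, coefA hA (A *ᵥ x) k = hA.eigenvalues k * coefA hA x k := fun k => eig_dot hA x k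
  calc x ⬝ᵥ (A *ᵥ x) = ∑ m, x m * (A *ᵥ x) m := rfl
    _ = ∑ k, coefA hA x k * coefA hA (A *ᵥ x) k := h.symm
    _ = ∑ k, hA.eigenvalues k * (coefA hA x k) ^ 2 := by
        refine Finset.sum_congr rfl fun k _ => ?_
        rw [h2 k]; ring

lemma eig_kill (y : Fin n → ℝ) (θ : ℝ) (hy : A *ᵥ y = θ • y) (k : Fin n) :
    (hA.eigenvalues k - θ) * coefA hA y k = 0 := by
  have h := eig_dot hA y k
  rw [hy] at h
  have : (hA.eigenvectorBasis k : Fin n → ℝ) ⬝ᵥ (θ • y) = θ * coefA hA y k := by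
    rw [dotProduct_smul]; rfl
  rw [this] at h
  linarith [h]

lemma eigenvalues_nonneg (hpsd : ∀ x : Fin n → ℝ, 0 ≤ x ⬝ᵥ (A *ᵥ x)) (k : Fin n) :
    0 ≤ hA.eigenvalues k := by
  have h := eig_dot hA (hA.eigenvectorBasis k) k
  rw [basis_dot hA k k] at h
  simpa using le_of_le_of_eq (hpsd (hA.eigenvectorBasis k)) h

lemma coefA_add_smul (x y : Fin n → ℝ) (a b : ℝ) (k : Fin n) :
    coefA hA (a • x + b • y) k = a * coefA hA x k + b * coefA hA y k := by
  unfold coefA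
  rw [Finset.mul_sum, Finset.mul_sum, ← Finset.sum_add_distrib]
  refine Finset.sum_congr rfl fun m _ => ?_
  simp only [Pi.add_apply, Pi.smul_apply, smul_eq_mul]; ring

lemma sum_two {k0 k1 : Fin n} (hne : k0 ≠ k1) (f : Fin n → ℝ)
    (hf : ∀ k, k ≠ k0 → k ≠ k1 → f k = 0) : ∑ k, f k = f k0 + f k1 := by
  rw [← Finset.sum_pair hne]
  refine (Finset.sum_subset (Finset.subset_univ _) ?_).symm
  intro k _ hk
  simp only [Finset.mem_insert, Finset.mem_singleton, not_or] at hk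
  exact hf k hk.1 hk.2

end Aux

section LapLemmas

variable {n : ℕ} {W : Matrix (Fin n) (Fin n) ℝ}

lemma lap_mulVec_ones : lap W *ᵥ (fun _ => (1:ℝ)) = 0 := by
  funext a
  simp only [lap, Matrix.sub_mulVec, Matrix.mulVec_diagonal, Pi.sub_apply, Pi.zero_apply,
    Matrix.mulVec, dotProduct, mul_one]
  simp [Matrix.diagonal_apply, deg, Finset.sum_ite_eq]

lemma lap_quad_s11 (hsymm : W.IsSymm) (x : Fin n → ℝ) :
    x ⬝ᵥ (lap W *ᵥ x) = (∑ i, ∑ j, W i j * (x i - x j)^2) / 2 := by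
  have hW : ∀ a b, W b a = W a b := fun a b => hsymm.apply a b
  have hdiagquad : x ⬝ᵥ (Matrix.diagonal (deg W) *ᵥ x) = ∑ a, ∑ b, W a b * x a ^ 2 := by
    refine Finset.sum_congr rfl fun a _ => ?_
    rw [Matrix.mulVec_diagonal, deg, Finset.sum_mul, Finset.mul_sum]
    exact Finset.sum_congr rfl fun b _ => by ring
  have hWquad : x ⬝ᵥ (W *ᵥ x) = ∑ a, ∑ b, W a b * (x a * x b) := by
    refine Finset.sum_congr rfl fun a _ => ?_
    show x a * (W a ⬝ᵥ x) = _
    rw [dotProduct, Finset.mul_sum]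
    exact Finset.sum_congr rfl fun b _ => by ring
  have h1 : ∑ a, ∑ b, W a b * x b ^ 2 = ∑ a, ∑ b, W a b * x a ^ 2 := by
    rw [Finset.sum_comm]
    exact Finset.sum_congr rfl fun a _ => Finset.sum_congr rfl fun b _ => by rw [hW]
  have lhs : x ⬝ᵥ (lap W *ᵥ x) =
      (∑ a, ∑ b, W a b * x a ^ 2) - ∑ a, ∑ b, W a b * (x a * x b) := by
    unfold lap
    rw [Matrix.sub_mulVec, dotProduct_sub, hdiagquad, hWquad]
  have expand : ∑ a, ∑ b, W a b * (x a - x b)^2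
      = (∑ a, ∑ b, W a b * x a ^ 2) + ((∑ a, ∑ b, W a b * x b ^ 2)
        - 2 * ∑ a, ∑ b, W a b * (x a * x b)) := by
    rw [Finset.mul_sum, ← Finset.sum_sub_distrib, ← Finset.sum_add_distrib]
    refine Finset.sum_congr rfl fun a _ => ?_
    rw [Finset.mul_sum, ← Finset.sum_sub_distrib, ← Finset.sum_add_distrib]
    exact Finset.sum_congr rfl fun b _ => by ring
  rw [lhs, eq_div_iff (by norm_num : (2:ℝ) ≠ 0), expand, h1]
  ring

lemma lap_psd (hsymm : W.IsSymm) (hw : ∀ a b, 0 ≤ W a b) (x : Fin n → ℝ) :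
    0 ≤ x ⬝ᵥ (lap W *ᵥ x) := by
  rw [lap_quad_s11 hsymm]
  apply div_nonneg _ (by norm_num)
  exact Finset.sum_nonneg fun a _ => Finset.sum_nonneg fun b _ =>
    mul_nonneg (hw a b) (sq_nonneg _)

lemma vij_dot (i j : Fin n) (x : Fin n → ℝ) : vij i j ⬝ᵥ x = x i - x j := by
  simp [vij, dotProduct, sub_mul, Finset.sum_sub_distrib, ite_mul]

lemma vmv_mulVec (i j : Fin n) (x : Fin n → ℝ) :
    vecMulVec (vij i j) (vij i j) *ᵥ x = (x i - x j) • vij i j := by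
  funext a
  simp only [Matrix.mulVec, dotProduct, vecMulVec_apply, Pi.smul_apply, smul_eq_mul]
  have : ∑ m, vij i j a * vij i j m * x m = vij i j a * ∑ m, vij i j m * x m := by
    rw [Finset.mul_sum]
    exact Finset.sum_congr rfl fun m _ => by ring
  rw [this]
  have hd : ∑ m, vij i j m * x m = x i - x j := vij_dot i j x
  rw [hd]; ring

lemma lapP_mulVec (i j : Fin n) (δ : ℝ) (x : Fin n → ℝ) :
    (lap W + δ • vecMulVec (vij i j) (vij i j)) *ᵥ x
      = lap W *ᵥ x + (δ * (x i - x j)) • vij i j := by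
  rw [Matrix.add_mulVec, Matrix.smul_mulVec, vmv_mulVec, smul_smul]

lemma lapP_quad (i j : Fin n) (δ : ℝ) (x : Fin n → ℝ) :
    x ⬝ᵥ ((lap W + δ • vecMulVec (vij i j) (vij i j)) *ᵥ x)
      = x ⬝ᵥ (lap W *ᵥ x) + δ * (x i - x j) ^ 2 := by
  rw [lapP_mulVec, dotProduct_add, dotProduct_smul]
  have : x ⬝ᵥ vij i j = x i - x j := by
    simp [vij, dotProduct, mul_sub, Finset.sum_sub_distrib, mul_ite]
  rw [this, smul_eq_mul]; ring

lemma lapP_mulVec_ones (i j : Fin n) (δ : ℝ) :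
    (lap W + δ • vecMulVec (vij i j) (vij i j)) *ᵥ (fun _ => (1:ℝ)) = 0 := by
  rw [lapP_mulVec, lap_mulVec_ones]
  norm_num

end LapLemmas

lemma two_mul_sq (x y : ℝ) : (x - y) ^ 2 ≤ 2 * (x * x + y * y) := by
  nlinarith [sq_nonneg (x + y)]

set_option maxHeartbeats 1000000 in
/-- Theorem 2: bounds on the change in the spectral gap when weight
`δ` is added to the edge `(i,j)`, in terms of `α = |v_i - v_j|` where `v` is a unit-norm
Fiedler vector, and `β = λ₃(L) - λ₂(L)`. Here `μ` (resp. `ν`) lists the eigenvalues of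
`L` (resp. `L⁺ = L + δ v_ij v_ijᵀ`) with multiplicity in increasing order; we assume
`n ≥ 3` so that `λ₃(L)` is defined. -/
theorem stmt_11 {n : ℕ} (hn : 3 ≤ n) (wbar : ℝ) (hwbar : 0 < wbar)
    (W : Matrix (Fin n) (Fin n) ℝ)
    (hsymm : W.IsSymm) (hdiag : ∀ i, W i i = 0)
    (hW : ∀ i j, 0 ≤ W i j ∧ W i j ≤ wbar)
    (i j : Fin n) (hij : i ≠ j)
    (hwij : W i j < wbar)
    (δ : ℝ) (hδ0 : 0 < δ) (hδ : δ ≤ wbar - W i j)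
    (hL : (lap W).IsHermitian)
    (μ : Fin n → ℝ) (hmono : Monotone μ)
    (hperm : ∃ σ : Equiv.Perm (Fin n), hL.eigenvalues = μ ∘ σ)
    (hLp : (lap W + δ • vecMulVec (vij i j) (vij i j)).IsHermitian)
    (ν : Fin n → ℝ) (hνmono : Monotone ν)
    (hνperm : ∃ σ : Equiv.Perm (Fin n), hLp.eigenvalues = ν ∘ σ)
    (v : Fin n → ℝ) (hvnorm : (∑ k, v k ^ 2) = 1)
    (hev : lap W *ᵥ v = μ ⟨1, by omega⟩ • v) (hones : (∑ k, v k) = 0)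
    (α : ℝ) (hα : α = |v i - v j|) :
    ν ⟨1, by omega⟩ - μ ⟨1, by omega⟩ ≤ δ * α ^ 2 ∧
      (0 < μ ⟨2, by omega⟩ - μ ⟨1, by omega⟩ →
        max (1 - 2 * δ / (μ ⟨2, by omega⟩ - μ ⟨1, by omega⟩)) 0 * (δ * α ^ 2) ≤
          ν ⟨1, by omega⟩ - μ ⟨1, by omega⟩) := by
  obtain ⟨σ, hσ⟩ := hperm
  obtain ⟨τ, hτ⟩ := hνperm
  have i0 : Fin n := ⟨0, by omega⟩
  -- use explicit indices
  let idx0 : Fin n := ⟨0, by omega⟩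
  let idx1 : Fin n := ⟨1, by omega⟩
  let idx2 : Fin n := ⟨2, by omega⟩
  have hμval : ∀ k, hL.eigenvalues k = μ (σ k) := fun k => congrFun hσ k
  have hνval : ∀ k, hLp.eigenvalues k = ν (τ k) := fun k => congrFun hτ k
  have hWnn : ∀ a b, 0 ≤ W a b := fun a b => (hW a b).1
  have hLpsd : ∀ x : Fin n → ℝ, 0 ≤ x ⬝ᵥ (lap W *ᵥ x) := lap_psd hsymm hWnn
  have hBpsd : ∀ x : Fin n → ℝ,
      0 ≤ x ⬝ᵥ ((lap W + δ • vecMulVec (vij i j) (vij i j)) *ᵥ x) := by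
    intro x
    rw [lapP_quad]
    have h1 := hLpsd x
    have h2 : 0 ≤ δ * (x i - x j) ^ 2 := by positivity
    linarith
  have hμnn : ∀ m : Fin n, 0 ≤ μ m := by
    intro m
    have h := eigenvalues_nonneg hL hLpsd (σ.symm m)
    rwa [hμval, Equiv.apply_symm_apply] at h
  have hνnn : ∀ m : Fin n, 0 ≤ ν m := by
    intro m
    have h := eigenvalues_nonneg hLp hBpsd (τ.symm m)
    rwa [hνval, Equiv.apply_symm_apply] at h
  have hev' : lap W *ᵥ v = μ idx1 • v := hev
  set o : Fin n → ℝ := fun _ => (1:ℝ) with ho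
  have hLones : lap W *ᵥ o = 0 := lap_mulVec_ones
  have hBones : (lap W + δ • vecMulVec (vij i j) (vij i j)) *ᵥ o = 0 := lapP_mulVec_ones i j δ
  have hvv : v ⬝ᵥ v = 1 := by
    rw [show v ⬝ᵥ v = ∑ m, v m * v m from rfl, ← hvnorm]
    exact Finset.sum_congr rfl fun m _ => (pow_two (v m)).symm
  have hov : o ⬝ᵥ v = 0 := by
    rw [show o ⬝ᵥ v = ∑ m, o m * v m from rfl]
    simpa [ho] using hones
  have hvo : v ⬝ᵥ o = 0 := by rw [dotProduct_comm]; exact hov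
  have hoo : o ⬝ᵥ o = (n : ℝ) := by
    simp [ho, dotProduct]
  have hvLv : v ⬝ᵥ (lap W *ᵥ v) = μ idx1 := by
    rw [hev', dotProduct_smul, smul_eq_mul, hvv, mul_one]
  set a : ℝ := v i - v j with hadef
  have hαa : α ^ 2 = a ^ 2 := by rw [hα, sq_abs]
  have ha2 : a ^ 2 ≤ 2 := by
    have hsub : v i ^ 2 + v j ^ 2 ≤ ∑ k, v k ^ 2 := by
      have h := Finset.sum_le_sum_of_subset_of_nonneg
        (Finset.subset_univ ({i, j} : Finset (Fin n))) (fun k _ _ => sq_nonneg (v k))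
      rwa [Finset.sum_pair hij] at h
    rw [hvnorm] at hsub
    rw [hadef]
    linarith [two_mul_sq (v i) (v j), hsub]
  have hvBv : v ⬝ᵥ ((lap W + δ • vecMulVec (vij i j) (vij i j)) *ᵥ v)
      = μ idx1 + δ * a ^ 2 := by
    rw [lapP_quad, hvLv]
  have hn1 : (1:ℝ) ≤ (n:ℝ) := by
    have : (1:ℕ) ≤ n := by omega
    exact_mod_cast this
  -- ===================== PART 1 =====================
  have part1 : ν idx1 ≤ μ idx1 + δ * a ^ 2 := by
    set k0 := τ.symm idx0 with hk0
    obtain ⟨a1, b1, hzcoef, hab⟩ :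
        ∃ a1 b1 : ℝ, a1 * coefA hLp o k0 + b1 * coefA hLp v k0 = 0 ∧ 0 < a1 ^ 2 + b1 ^ 2 := by
      by_cases hd : coefA hLp o k0 = 0
      · exact ⟨1, 0, by rw [hd]; ring, by norm_num⟩
      · refine ⟨coefA hLp v k0, -(coefA hLp o k0), by ring, ?_⟩
        have h1 : 0 < (coefA hLp o k0) ^ 2 := by
          have := pow_pos (abs_pos.mpr hd) 2
          rwa [sq_abs] at this
        have h2 : (coefA hLp v k0) ^ 2 + (-(coefA hLp o k0)) ^ 2
            = (coefA hLp o k0) ^ 2 + (coefA hLp v k0) ^ 2 := by ring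
        rw [h2]
        have h3 := sq_nonneg (coefA hLp v k0)
        linarith
    set z : Fin n → ℝ := a1 • o + b1 • v with hzdef
    have hzc : coefA hLp z k0 = 0 := by
      rw [hzdef, coefA_add_smul]; exact hzcoef
    have hzz : z ⬝ᵥ z = a1 ^ 2 * n + b1 ^ 2 := by
      rw [hzdef]
      simp only [add_dotProduct, smul_dotProduct, dotProduct_add,
        dotProduct_smul, smul_eq_mul, hoo, hov, hvo, hvv]
      ring
    have hspec : ν idx1 * (z ⬝ᵥ z) ≤ z ⬝ᵥ ((lap W + δ • vecMulVec (vij i j) (vij i j)) *ᵥ z) := by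
      rw [quad_expand hLp z]
      have hpz : z ⬝ᵥ z = ∑ k, coefA hLp z k * coefA hLp z k := (parseval hLp z z).symm
      rw [hpz, Finset.mul_sum]
      apply Finset.sum_le_sum
      intro k _
      by_cases hk : k = k0
      · rw [hk, hzc]; simp
      · have hτk : τ k ≠ idx0 := fun hc => hk (by rw [← Equiv.symm_apply_apply τ k, hc])
        have hvpos : 0 < (τ k).val := Nat.pos_of_ne_zero (fun h0 => hτk (Fin.ext h0))
        have hle : idx1 ≤ τ k := by
          rw [Fin.le_def]; exact hvpos
        have hmle : ν idx1 ≤ ν (τ k) := hνmono hle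
        calc ν idx1 * (coefA hLp z k * coefA hLp z k)
            ≤ ν (τ k) * (coefA hLp z k * coefA hLp z k) :=
              mul_le_mul_of_nonneg_right hmle (mul_self_nonneg _)
          _ = hLp.eigenvalues k * (coefA hLp z k) ^ 2 := by rw [hνval k]; ring
    have hoBv : o ⬝ᵥ ((lap W + δ • vecMulVec (vij i j) (vij i j)) *ᵥ v) = 0 := by
      rw [dot_symm hLp, hBones, zero_dotProduct]
    have hBz : z ⬝ᵥ ((lap W + δ • vecMulVec (vij i j) (vij i j)) *ᵥ z)
        = b1 ^ 2 * (μ idx1 + δ * a ^ 2) := by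
      rw [hzdef, Matrix.mulVec_add, Matrix.mulVec_smul, Matrix.mulVec_smul, hBones,
        smul_zero, zero_add]
      simp only [add_dotProduct, smul_dotProduct, dotProduct_smul,
        smul_eq_mul, hoBv, hvBv]
      ring
    have hBnn : 0 ≤ μ idx1 + δ * a ^ 2 := by
      have h1 := hμnn idx1
      have h2 : 0 ≤ δ * a ^ 2 := by positivity
      linarith
    have hle2 : ν idx1 * (a1 ^ 2 * n + b1 ^ 2) ≤ (μ idx1 + δ * a ^ 2) * (a1 ^ 2 * n + b1 ^ 2) := by
      have h1 : ν idx1 * (a1 ^ 2 * n + b1 ^ 2) ≤ b1 ^ 2 * (μ idx1 + δ * a ^ 2) := by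
        rw [← hBz, ← hzz]; exact hspec
      have h2 : b1 ^ 2 * (μ idx1 + δ * a ^ 2) ≤ (μ idx1 + δ * a ^ 2) * (a1 ^ 2 * n + b1 ^ 2) := by
        have ha1n : (0:ℝ) ≤ a1 ^ 2 * n := by positivity
        have hb : b1 ^ 2 ≤ a1 ^ 2 * n + b1 ^ 2 := by linarith
        calc b1 ^ 2 * (μ idx1 + δ * a ^ 2) = (μ idx1 + δ * a ^ 2) * (b1 ^ 2) := by ring
          _ ≤ (μ idx1 + δ * a ^ 2) * (a1 ^ 2 * n + b1 ^ 2) :=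
              mul_le_mul_of_nonneg_left hb hBnn
      linarith
    have hpos : (0:ℝ) < a1 ^ 2 * n + b1 ^ 2 := by
      have hmul : a1 ^ 2 * 1 ≤ a1 ^ 2 * n := mul_le_mul_of_nonneg_left hn1 (sq_nonneg a1)
      have := hab
      linarith
    exact le_of_mul_le_mul_right hle2 hpos
  refine ⟨by rw [hαa]; linarith, ?_⟩
  -- ===================== PART 2 =====================
  intro hβ0
  have hβ : 0 < μ idx2 - μ idx1 := hβ0
  show max (1 - 2 * δ / (μ idx2 - μ idx1)) 0 * (δ * α ^ 2) ≤ ν idx1 - μ idx1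
  set β : ℝ := μ idx2 - μ idx1 with hβdef
  -- eigenvectors of the perturbed Laplacian for ν₁, ν₂
  set k0' := τ.symm idx0 with hk0'
  set k1' := τ.symm idx1 with hk1'
  have hk01' : k0' ≠ k1' := by
    intro h
    have : idx0 = idx1 := by
      have := congrArg τ h
      rwa [Equiv.apply_symm_apply, Equiv.apply_symm_apply] at this
    exact absurd (congrArg Fin.val this) (by norm_num)
  set u0 : Fin n → ℝ := (hLp.eigenvectorBasis k0' : Fin n → ℝ) with hu0
  set u1 : Fin n → ℝ := (hLp.eigenvectorBasis k1' : Fin n → ℝ) with hu1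
  have hBu0 : (lap W + δ • vecMulVec (vij i j) (vij i j)) *ᵥ u0 = ν idx0 • u0 := by
    have h := hLp.mulVec_eigenvectorBasis k0'
    rw [hνval, Equiv.apply_symm_apply] at h
    exact h
  have hBu1 : (lap W + δ • vecMulVec (vij i j) (vij i j)) *ᵥ u1 = ν idx1 • u1 := by
    have h := hLp.mulVec_eigenvectorBasis k1'
    rw [hνval, Equiv.apply_symm_apply] at h
    exact h
  have hu00 : u0 ⬝ᵥ u0 = 1 := by
    rw [hu0, coefA_dot, basis_dot]; simp
  have hu11 : u1 ⬝ᵥ u1 = 1 := by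
    rw [hu1, coefA_dot, basis_dot]; simp
  have hu01 : u0 ⬝ᵥ u1 = 0 := by
    rw [hu0, coefA_dot, basis_dot]; simp [hk01']
  have hu10 : u1 ⬝ᵥ u0 = 0 := by
    rw [hu1, coefA_dot, basis_dot]; simp [Ne.symm hk01']
  obtain ⟨a2, b2, hzo, hab⟩ :
      ∃ a2 b2 : ℝ, a2 * (o ⬝ᵥ u0) + b2 * (o ⬝ᵥ u1) = 0 ∧ 0 < a2 ^ 2 + b2 ^ 2 := by
    by_cases hd : o ⬝ᵥ u0 = 0
    · exact ⟨1, 0, by rw [hd]; ring, by norm_num⟩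
    · refine ⟨o ⬝ᵥ u1, -(o ⬝ᵥ u0), by ring, ?_⟩
      have h1 : 0 < (o ⬝ᵥ u0) ^ 2 := by
        have := pow_pos (abs_pos.mpr hd) 2
        rwa [sq_abs] at this
      have h2 : (o ⬝ᵥ u1) ^ 2 + (-(o ⬝ᵥ u0)) ^ 2 = (o ⬝ᵥ u0) ^ 2 + (o ⬝ᵥ u1) ^ 2 := by ring
      rw [h2]
      have h3 := sq_nonneg (o ⬝ᵥ u1)
      linarith
  set z : Fin n → ℝ := a2 • u0 + b2 • u1 with hzdef
  have hoz : o ⬝ᵥ z = 0 := by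
    rw [hzdef, dotProduct_add, dotProduct_smul, dotProduct_smul,
      smul_eq_mul, smul_eq_mul]
    exact hzo
  have hzz : z ⬝ᵥ z = a2 ^ 2 + b2 ^ 2 := by
    rw [hzdef]
    simp only [add_dotProduct, smul_dotProduct, dotProduct_add,
      dotProduct_smul, smul_eq_mul, hu00, hu11, hu01, hu10]
    ring
  have hzBz : z ⬝ᵥ ((lap W + δ • vecMulVec (vij i j) (vij i j)) *ᵥ z)
      = a2 ^ 2 * ν idx0 + b2 ^ 2 * ν idx1 := by
    rw [hzdef, Matrix.mulVec_add, Matrix.mulVec_smul, Matrix.mulVec_smul, hBu0, hBu1]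
    simp only [add_dotProduct, smul_dotProduct, dotProduct_add,
      dotProduct_smul, smul_eq_mul, hu00, hu11, hu01, hu10]
    ring
  have hν01 : ν idx0 ≤ ν idx1 := hνmono (by rw [Fin.le_def]; norm_num)
  have hzBz_up : z ⬝ᵥ ((lap W + δ • vecMulVec (vij i j) (vij i j)) *ᵥ z)
      ≤ ν idx1 * (a2 ^ 2 + b2 ^ 2) := by
    rw [hzBz]
    have hmul : a2 ^ 2 * ν idx0 ≤ a2 ^ 2 * ν idx1 := mul_le_mul_of_nonneg_left hν01 (sq_nonneg a2)
    linarith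
  -- decompose z = c • v + w
  set c : ℝ := v ⬝ᵥ z with hcdef
  set w : Fin n → ℝ := z - c • v with hwdef
  have hz_eq : z = c • v + w := by rw [hwdef]; ring_nf
  have hvw : v ⬝ᵥ w = 0 := by
    rw [hwdef, dotProduct_sub, dotProduct_smul, smul_eq_mul, hvv]
    ring
  have hwv : w ⬝ᵥ v = 0 := by rw [dotProduct_comm]; exact hvw
  have how : o ⬝ᵥ w = 0 := by
    rw [hwdef, dotProduct_sub, dotProduct_smul, smul_eq_mul, hov, hoz]
    ring
  set p : ℝ := w ⬝ᵥ w with hpdef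
  have hp0 : 0 ≤ p := by
    rw [hpdef, show w ⬝ᵥ w = ∑ m, w m * w m from rfl]
    exact Finset.sum_nonneg fun m _ => mul_self_nonneg _
  have hnorm_split : a2 ^ 2 + b2 ^ 2 = c ^ 2 + p := by
    rw [← hzz, hpdef, hz_eq]
    simp only [add_dotProduct, smul_dotProduct, dotProduct_add,
      dotProduct_smul, smul_eq_mul, hvv, hvw, hwv]
    ring
  have hzLz : z ⬝ᵥ (lap W *ᵥ z) = c ^ 2 * μ idx1 + w ⬝ᵥ (lap W *ᵥ w) := by
    have hvLw : v ⬝ᵥ (lap W *ᵥ w) = 0 := by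
      rw [dot_symm hL, hev', smul_dotProduct, smul_eq_mul, hvw, mul_zero]
    have hwLv : w ⬝ᵥ (lap W *ᵥ v) = 0 := by
      rw [hev', dotProduct_smul, smul_eq_mul, hwv, mul_zero]
    rw [hz_eq, Matrix.mulVec_add, Matrix.mulVec_smul]
    simp only [add_dotProduct, smul_dotProduct, dotProduct_add,
      dotProduct_smul, smul_eq_mul, hvLv, hvLw, hwLv]
    ring
  -- spectral bound for w
  set k0 := σ.symm idx0 with hk0
  set k1 := σ.symm idx1 with hk1
  have hk01 : k0 ≠ k1 := by
    intro h
    have : idx0 = idx1 := by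
      have := congrArg σ h
      rwa [Equiv.apply_symm_apply, Equiv.apply_symm_apply] at this
    exact absurd (congrArg Fin.val this) (by norm_num)
  have hLo0 : lap W *ᵥ o = (0:ℝ) • o := by rw [hLones]; simp
  have hd_kill : ∀ k, μ (σ k) * coefA hL o k = 0 := by
    intro k
    have h := eig_kill hL o 0 hLo0 k
    rwa [hμval, sub_zero] at h
  have he_kill : ∀ k, (μ (σ k) - μ idx1) * coefA hL v k = 0 := by
    intro k
    have h := eig_kill hL v (μ idx1) hev' k
    rwa [hμval] at h
  have hμ01 : μ idx0 ≤ μ idx1 := hmono (by rw [Fin.le_def]; norm_num)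
  have hμ2pos : 0 < μ idx2 := by
    have := hμnn idx1
    rw [hβdef] at hβ
    linarith
  have hout : ∀ k, k ≠ k0 → k ≠ k1 → μ idx2 ≤ μ (σ k) := by
    intro k hk0ne hk1ne
    have h0 : σ k ≠ idx0 := fun hc => hk0ne (by rw [← Equiv.symm_apply_apply σ k, hc])
    have h1 : σ k ≠ idx1 := fun hc => hk1ne (by rw [← Equiv.symm_apply_apply σ k, hc])
    have hval : 2 ≤ (σ k).val := by
      have hv0 : (σ k).val ≠ 0 := fun h => h0 (Fin.ext h)
      have hv1 : (σ k).val ≠ 1 := fun h => h1 (Fin.ext h)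
      omega
    exact hmono (by rw [Fin.le_def]; exact hval)
  have hdout : ∀ k, k ≠ k0 → k ≠ k1 → coefA hL o k = 0 := by
    intro k h0 h1
    have hpos : 0 < μ (σ k) := lt_of_lt_of_le hμ2pos (hout k h0 h1)
    have := hd_kill k
    exact (mul_eq_zero.mp this).resolve_left (ne_of_gt hpos)
  have heout : ∀ k, k ≠ k0 → k ≠ k1 → coefA hL v k = 0 := by
    intro k h0 h1
    have hpos : 0 < μ (σ k) - μ idx1 := by
      have := hout k h0 h1
      rw [hβdef] at hβ
      linarith
    have := he_kill k
    exact (mul_eq_zero.mp this).resolve_left (ne_of_gt hpos)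
  have hsum_oo : ∑ m, o m * o m = (n:ℝ) := by simp [ho]
  have hsum_vv : ∑ m, v m * v m = 1 := hvv
  have hsum_ov : ∑ m, o m * v m = 0 := by simpa [ho] using hones
  have hsum_ow : ∑ m, o m * w m = 0 := how
  have hsum_vw : ∑ m, v m * w m = 0 := hvw
  have hdd : coefA hL o k0 * coefA hL o k0 + coefA hL o k1 * coefA hL o k1 = (n:ℝ) := by
    have h2 : (∑ k, coefA hL o k * coefA hL o k)
        = coefA hL o k0 * coefA hL o k0 + coefA hL o k1 * coefA hL o k1 :=
      sum_two hk01 _ (fun k h0 h1 => by rw [hdout k h0 h1]; ring)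
    have h3 := parseval hL o o
    rw [hsum_oo] at h3
    rw [← h2]; exact h3
  have hee : coefA hL v k0 * coefA hL v k0 + coefA hL v k1 * coefA hL v k1 = 1 := by
    have h2 : (∑ k, coefA hL v k * coefA hL v k)
        = coefA hL v k0 * coefA hL v k0 + coefA hL v k1 * coefA hL v k1 :=
      sum_two hk01 _ (fun k h0 h1 => by rw [heout k h0 h1]; ring)
    have h3 := parseval hL v v
    rw [hsum_vv] at h3
    rw [← h2]; exact h3
  have hde : coefA hL o k0 * coefA hL v k0 + coefA hL o k1 * coefA hL v k1 = 0 := by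
    have h2 : (∑ k, coefA hL o k * coefA hL v k)
        = coefA hL o k0 * coefA hL v k0 + coefA hL o k1 * coefA hL v k1 :=
      sum_two hk01 _ (fun k h0 h1 => by rw [hdout k h0 h1]; ring)
    have h3 := parseval hL o v
    rw [hsum_ov] at h3
    rw [← h2]; exact h3
  have hdcw : coefA hL o k0 * coefA hL w k0 + coefA hL o k1 * coefA hL w k1 = 0 := by
    have h2 : (∑ k, coefA hL o k * coefA hL w k)
        = coefA hL o k0 * coefA hL w k0 + coefA hL o k1 * coefA hL w k1 :=
      sum_two hk01 _ (fun k h0 h1 => by rw [hdout k h0 h1]; ring)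
    have h3 := parseval hL o w
    rw [hsum_ow] at h3
    rw [← h2]; exact h3
  have hecw : coefA hL v k0 * coefA hL w k0 + coefA hL v k1 * coefA hL w k1 = 0 := by
    have h2 : (∑ k, coefA hL v k * coefA hL w k)
        = coefA hL v k0 * coefA hL w k0 + coefA hL v k1 * coefA hL w k1 :=
      sum_two hk01 _ (fun k h0 h1 => by rw [heout k h0 h1]; ring)
    have h3 := parseval hL v w
    rw [hsum_vw] at h3
    rw [← h2]; exact h3
  have hdet : (coefA hL o k0 * coefA hL v k1 - coefA hL o k1 * coefA hL v k0) ^ 2 = (n:ℝ) := by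
    linear_combination (coefA hL v k0 * coefA hL v k0 + coefA hL v k1 * coefA hL v k1) * hdd
      + (n:ℝ) * hee - (coefA hL o k0 * coefA hL v k0 + coefA hL o k1 * coefA hL v k1) * hde
  have hdetne : coefA hL o k0 * coefA hL v k1 - coefA hL o k1 * coefA hL v k0 ≠ 0 := by
    intro h
    rw [h] at hdet
    have hnpos : (0:ℝ) < (n:ℝ) := by positivity
    rw [show ((0:ℝ))^2 = 0 by ring] at hdet
    linarith
  have hcw0 : coefA hL w k0 = 0 := by
    have hmul : (coefA hL o k0 * coefA hL v k1 - coefA hL o k1 * coefA hL v k0)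
        * coefA hL w k0 = 0 := by
      linear_combination coefA hL v k1 * hdcw - coefA hL o k1 * hecw
    exact (mul_eq_zero.mp hmul).resolve_left hdetne
  have hcw1 : coefA hL w k1 = 0 := by
    have hmul : (coefA hL o k0 * coefA hL v k1 - coefA hL o k1 * coefA hL v k0)
        * coefA hL w k1 = 0 := by
      linear_combination coefA hL o k0 * hecw - coefA hL v k0 * hdcw
    exact (mul_eq_zero.mp hmul).resolve_left hdetne
  have hwLw : μ idx2 * p ≤ w ⬝ᵥ (lap W *ᵥ w) := by
    rw [quad_expand hL w]
    have hp_sum : p = ∑ k, coefA hL w k * coefA hL w k :=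
      hpdef.trans (parseval hL w w).symm
    rw [hp_sum, Finset.mul_sum]
    apply Finset.sum_le_sum
    intro k _
    by_cases h0 : k = k0
    · rw [h0, hcw0]; simp
    · by_cases h1 : k = k1
      · rw [h1, hcw1]; simp
      · have hge := hout k h0 h1
        calc μ idx2 * (coefA hL w k * coefA hL w k)
            ≤ μ (σ k) * (coefA hL w k * coefA hL w k) :=
              mul_le_mul_of_nonneg_right hge (mul_self_nonneg _)
          _ = hL.eigenvalues k * (coefA hL w k) ^ 2 := by rw [hμval k]; ring
  set t : ℝ := w i - w j with htdef
  have hwsub : w i * w i + w j * w j ≤ p := by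
    have h := Finset.sum_le_sum_of_subset_of_nonneg
      (Finset.subset_univ ({i, j} : Finset (Fin n))) (fun k _ _ => mul_self_nonneg (w k))
    rw [Finset.sum_pair hij] at h
    exact h
  have ht2 : t ^ 2 ≤ 2 * p := by
    rw [htdef]
    linarith [two_mul_sq (w i) (w j), hwsub]
  have hzij : z i - z j = c * a + t := by
    have hzi := congrFun hz_eq i
    have hzj := congrFun hz_eq j
    simp only [Pi.add_apply, Pi.smul_apply, smul_eq_mul] at hzi hzj
    rw [hzi, hzj, htdef, hadef]
    ring
  have hzBz_low : μ idx1 * (c ^ 2 + p) + β * p + δ * (c * a + t) ^ 2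
      ≤ z ⬝ᵥ ((lap W + δ • vecMulVec (vij i j) (vij i j)) *ᵥ z) := by
    rw [lapP_quad, hzLz, hzij, hβdef]
    linarith [hwLw]
  have hs : 0 < c ^ 2 + p := by rw [← hnorm_split]; exact hab
  have hβpos : 0 < β := hβ
  have hkey : max (1 - 2 * δ / β) 0 * (δ * a ^ 2) * (c ^ 2 + p)
      ≤ β * p + δ * (c * a + t) ^ 2 := by
    rcases le_or_gt (1 - 2 * δ / β) 0 with hc1 | hc2
    · rw [max_eq_right hc1]
      have h1 : 0 ≤ β * p := mul_nonneg hβpos.le hp0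
      have h2 : 0 ≤ δ * (c * a + t) ^ 2 := by positivity
      rw [zero_mul, zero_mul]
      linarith
    · rw [max_eq_left hc2.le]
      have h2δ : 2 * δ < β := by
        have := (div_lt_one hβpos).mp (by linarith : 2 * δ / β < 1)
        linarith
      have hrw : 1 - 2 * δ / β = (β - 2 * δ) / β := by
        field_simp
      rw [hrw, div_mul_eq_mul_div, div_mul_eq_mul_div, div_le_iff₀ hβpos]
      have hX1 : 0 ≤ (β - 2 * δ) * δ * ((2 - a ^ 2) * p) :=
        mul_nonneg (mul_nonneg (by linarith) hδ0.le) (mul_nonneg (by linarith) hp0)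
      have hX2 : 0 ≤ (β ^ 2 - 2 * β * δ + 4 * δ ^ 2) * (2 * p - t ^ 2) := by
        apply mul_nonneg
        · linarith [sq_nonneg (β - δ), sq_nonneg δ]
        · linarith
      have hX3 : 0 ≤ (β * t + 2 * δ * (c * a)) ^ 2 := sq_nonneg _
      have hX4 : 0 ≤ (δ * t) ^ 2 := sq_nonneg _
      linarith [hX1, hX2, hX3, hX4]
  clear_value β a c p t z w o
  have hchain : (μ idx1 + max (1 - 2 * δ / β) 0 * (δ * a ^ 2)) * (c ^ 2 + p)
      ≤ ν idx1 * (c ^ 2 + p) := by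
    have hup : z ⬝ᵥ ((lap W + δ • vecMulVec (vij i j) (vij i j)) *ᵥ z)
        ≤ ν idx1 * (c ^ 2 + p) := by
      rw [← hnorm_split]; exact hzBz_up
    linarith [hzBz_low, hkey]
  have hfin : μ idx1 + max (1 - 2 * δ / β) 0 * (δ * a ^ 2) ≤ ν idx1 :=
    le_of_mul_le_mul_right hchain hs
  rw [hαa]
  linarith
end
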